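/- For any bipartition (ρ;σ) of n, one has ((ρ;σ)^C)^B = ((ρ;σ)^B)^C, and this common value is the special closure (ρ;σ)°, i.e. the minimum special bipartition dominating (ρ;σ). -/
import Mathlib


open Finset

/-- Partial sum of the first `k` terms of a sequence of naturals. -/
def psum (π : ℕ → ℕ) (k : ℕ) : ℕ := ∑ i ∈ Finset.range k, π i

/-- A composition of `n`: almost all terms zero, summing to `n`. -/
def IsComposition (n : ℕ) (π : ℕ → ℕ) : Prop :=
  ∃ N, (∀ i, N ≤ i → π i = 0) ∧ psum π N = n

/-- Dominance order: `l` dominates `π`. -/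
def Dominates (l π : ℕ → ℕ) : Prop := ∀ k, psum π k ≤ psum l k

/-- A partition: weakly decreasing sequence. -/
def IsPartition (π : ℕ → ℕ) : Prop := ∀ i, π (i + 1) ≤ π i

/-- A quasi-partition: `π i ≥ π (i+2)` for all `i`. -/
def IsQuasiPartition (π : ℕ → ℕ) : Prop := ∀ i, π (i + 2) ≤ π i

/-- Interleaving of two sequences: `(ρ₁, σ₁, ρ₂, σ₂, …)` (0-indexed). -/
def interleave (ρ σ : ℕ → ℕ) (i : ℕ) : ℕ :=
  if i % 2 = 0 then ρ (i / 2) else σ (i / 2)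

/-- A bipartition of `n`: a pair of partitions whose interleaving sums to `n`. -/
def IsBipartition (n : ℕ) (ρ σ : ℕ → ℕ) : Prop :=
  IsPartition ρ ∧ IsPartition σ ∧ IsComposition n (interleave ρ σ)

/-- Interleaved dominance order on bipartitions: `(ρ;σ) ≤ (μ;ν)`. -/
def BiLE (ρ σ μ ν : ℕ → ℕ) : Prop :=
  Dominates (interleave μ ν) (interleave ρ σ)

/-- The map `Φ^C` on sequences: replace a consecutive pair `2s < 2t`
by `s+t, s+t` (pointwise description; replacements never overlap for
quasi-partitions). -/
def phiC (π : ℕ → ℕ) : ℕ → ℕ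
  | 0 => if π 0 < π 1 then (π 0 + π 1) / 2 else π 0
  | (j + 1) =>
      if π (j + 1) < π (j + 2) then (π (j + 1) + π (j + 2)) / 2
      else if π j < π (j + 1) then (π j + π (j + 1)) / 2
      else π (j + 1)

/-- `Φ^C` of a bipartition: apply `phiC` to the doubled interleaving. -/
def PhiC (ρ σ : ℕ → ℕ) : ℕ → ℕ := phiC (fun i => 2 * interleave ρ σ i)

/-- Membership in `P^C_{2n}`: partition of `2n` with every odd part of even
multiplicity. -/
def IsPC (n : ℕ) (l : ℕ → ℕ) : Prop :=
  IsPartition l ∧ IsComposition (2 * n) l ∧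
    ∀ a : ℕ, Odd a → Even ({i | l i = a}.ncard)

/-- C-distinguished: `μ i ≥ ν i - 1` and `ν i ≥ μ (i+1) - 1`. -/
def QC (μ ν : ℕ → ℕ) : Prop :=
  ∀ i, ν i ≤ μ i + 1 ∧ μ (i + 1) ≤ ν i + 1

/-- B-distinguished: `μ i ≥ ν i - 2` and `ν i ≥ μ (i+1)`. -/
def QB (μ ν : ℕ → ℕ) : Prop :=
  ∀ i, ν i ≤ μ i + 2 ∧ μ (i + 1) ≤ ν i

/-- Special: `μ i ≥ ν i - 1` and `ν i ≥ μ (i+1)`. -/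
def QS (μ ν : ℕ → ℕ) : Prop :=
  ∀ i, ν i ≤ μ i + 1 ∧ μ (i + 1) ≤ ν i

/-- The condition defining `Q_n^{B,2}`: `μ i ≥ ν i - 2`. -/
def QB2 (μ ν : ℕ → ℕ) : Prop := ∀ i, ν i ≤ μ i + 2

/-- For an antitone sequence, the starting index of the run of equal values
containing index `i`. -/
noncomputable def runStart (l : ℕ → ℕ) (i : ℕ) : ℕ := {j | l i < l j}.ncard

/-- The map `Φ̂^C`, pointwise: halve even parts; replace an (even-length)
maximal run of an odd part `2k+1` with `k, k+1, k, k+1, …`. -/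
noncomputable def hphiC (l : ℕ → ℕ) (i : ℕ) : ℕ :=
  if Even (l i) then l i / 2
  else if Even (i - runStart l i) then l i / 2 else l i / 2 + 1

/-- Partial sums of an integer sequence. -/
def zsum (π : ℕ → ℤ) (k : ℕ) : ℤ := ∑ i ∈ Finset.range k, π i

/-- Dominance order on integer sequences. -/
def ZDominates (l π : ℕ → ℤ) : Prop := ∀ k, zsum π k ≤ zsum l k

/-- The interleaved integer sequence `(2ρ₁+1, 2σ₁−1, 2ρ₂+1, 2σ₂−1, …)`. -/
def interB (ρ σ : ℕ → ℕ) (i : ℕ) : ℤ :=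
  if i % 2 = 0 then 2 * (ρ (i / 2) : ℤ) + 1 else 2 * (σ (i / 2) : ℤ) - 1

/-- The map `Φ^B` on integer sequences: replace a consecutive pair `s < t`
by `(s+t)/2, (s+t)/2` (pointwise description). -/
def phiB (π : ℕ → ℤ) : ℕ → ℤ
  | 0 => if π 0 < π 1 then (π 0 + π 1) / 2 else π 0
  | (j + 1) =>
      if π (j + 1) < π (j + 2) then (π (j + 1) + π (j + 2)) / 2
      else if π j < π (j + 1) then (π j + π (j + 1)) / 2
      else π (j + 1)

/-- `Φ^B` of a bipartition. -/
def PhiB (ρ σ : ℕ → ℕ) : ℕ → ℤ := phiB (interB ρ σ)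

/-- Membership in `P^B_{2n+1}` for an integer sequence: nonnegative, weakly
decreasing, summing to `2n+1`, with every (positive) even part of even
multiplicity. -/
def IsPB (n : ℕ) (l : ℕ → ℤ) : Prop :=
  (∀ i, 0 ≤ l i) ∧ (∀ i, l (i + 1) ≤ l i) ∧
  (∃ N, (∀ i, N ≤ i → l i = 0) ∧ zsum l N = 2 * n + 1) ∧
  ∀ a : ℤ, 0 < a → Even a → Even ({i | l i = a}.ncard)

/-- Membership in `P^B_{2n+1}` for a natural-number partition. -/
def IsPBN (n : ℕ) (l : ℕ → ℕ) : Prop :=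
  IsPartition l ∧ IsComposition (2 * n + 1) l ∧
    ∀ a : ℕ, 0 < a → Even a → Even ({i | l i = a}.ncard)

/-- The map `Φ̂^B`, pointwise (0-indexed, so the paper's index `i` is `j+1`):
an odd part `λ_i` becomes `(λ_i + (−1)^i)/2`; a maximal run of an even part
`2k` starting at (0-indexed) position `s` becomes `k, k, …` if `s` is odd
(paper's `i` even) and `k−1, k+1, k−1, k+1, …` if `s` is even (paper's `i`
odd). -/
noncomputable def hphiB (l : ℕ → ℕ) (j : ℕ) : ℕ :=
  if Odd (l j) then (if Even j then (l j - 1) / 2 else (l j + 1) / 2)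
  else
    if Odd (runStart l j) then l j / 2
    else if Even (j - runStart l j) then l j / 2 - 1 else l j / 2 + 1

/-- First component of the special closure `(ρ;σ)°`. -/
def scRho (ρ σ : ℕ → ℕ) : ℕ → ℕ
  | 0 => if ρ 0 + 1 < σ 0 then (ρ 0 + σ 0) / 2 else ρ 0
  | (i + 1) =>
      if ρ (i + 1) + 1 < σ (i + 1) then (ρ (i + 1) + σ (i + 1)) / 2
      else if σ i < ρ (i + 1) then (σ i + ρ (i + 1)) / 2
      else ρ (i + 1)

/-- Second component of the special closure `(ρ;σ)°`. -/
def scSigma (ρ σ : ℕ → ℕ) (i : ℕ) : ℕ :=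
  if ρ i + 1 < σ i then (ρ i + σ i + 1) / 2
  else if σ i < ρ (i + 1) then (σ i + ρ (i + 1) + 1) / 2
  else σ i

/-- First component of the closure `(ρ;σ)~` into `Q_n^{B,2}`. -/
def tRho (ρ σ : ℕ → ℕ) (i : ℕ) : ℕ :=
  if ρ i + 2 < σ i then (ρ i + σ i + 1) / 2 - 1 else ρ i

/-- Second component of the closure `(ρ;σ)~` into `Q_n^{B,2}`. -/
def tSigma (ρ σ : ℕ → ℕ) (i : ℕ) : ℕ :=
  if ρ i + 2 < σ i then (ρ i + σ i) / 2 + 1 else σ i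

/-- First component of the closure `(ρ;σ)^B` into `Q_n^B`. -/
def bRho (ρ σ : ℕ → ℕ) : ℕ → ℕ
  | 0 => if ρ 0 + 2 < σ 0 then (ρ 0 + σ 0 + 1) / 2 - 1 else ρ 0
  | (i + 1) =>
      if ρ (i + 1) + 2 < σ (i + 1) then (ρ (i + 1) + σ (i + 1) + 1) / 2 - 1
      else if σ i < ρ (i + 1) then (σ i + ρ (i + 1)) / 2
      else ρ (i + 1)

/-- Second component of the closure `(ρ;σ)^B` into `Q_n^B`. -/
def bSigma (ρ σ : ℕ → ℕ) (i : ℕ) : ℕ :=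
  if ρ i + 2 < σ i then (ρ i + σ i) / 2 + 1
  else if σ i < ρ (i + 1) then (σ i + ρ (i + 1) + 1) / 2
  else σ i

/-- First component of the closure `(ρ;σ)^C` into `Q_n^C`. -/
def cRho (ρ σ : ℕ → ℕ) : ℕ → ℕ
  | 0 => if ρ 0 + 1 < σ 0 then (ρ 0 + σ 0) / 2 else ρ 0
  | (i + 1) =>
      if ρ (i + 1) + 1 < σ (i + 1) then (ρ (i + 1) + σ (i + 1)) / 2
      else if σ i + 1 < ρ (i + 1) then (σ i + ρ (i + 1) + 1) / 2
      else ρ (i + 1)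

/-- Second component of the closure `(ρ;σ)^C` into `Q_n^C`. -/
def cSigma (ρ σ : ℕ → ℕ) (i : ℕ) : ℕ :=
  if ρ i + 1 < σ i then (ρ i + σ i + 1) / 2
  else if σ i + 1 < ρ (i + 1) then (σ i + ρ (i + 1)) / 2
  else σ i
section
variable {ρ σ : ℕ → ℕ}

lemma bc_rho (hρ : IsPartition ρ) (hσ : IsPartition σ) (i : ℕ) :
    bRho (cRho ρ σ) (cSigma ρ σ) i = scRho ρ σ i := by
  match i with
  | 0 =>
    have h1 := hρ 0; have h2 := hσ 0
    simp only [bRho, cRho, cSigma, scRho]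
    split_ifs <;> omega
  | (i+1) =>
    have h1 := hρ i; have h2 := hρ (i+1); have h3 := hσ i; have h4 := hσ (i+1)
    simp only [bRho, cRho, cSigma, scRho]
    split_ifs <;> omega

lemma bc_sigma (hρ : IsPartition ρ) (hσ : IsPartition σ) (i : ℕ) :
    bSigma (cRho ρ σ) (cSigma ρ σ) i = scSigma ρ σ i := by
  match i with
  | 0 =>
    have h1 := hρ 0; have h2 := hσ 0; have h3 := hρ 1; have h4 := hσ 1
    simp only [bSigma, cRho, cSigma, scSigma]
    split_ifs <;> omega
  | (i+1) =>
    have h1 := hρ i; have h2 := hρ (i+1); have h3 := hσ i; have h4 := hσ (i+1)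
    have h5 := hρ (i+2); have h6 := hσ (i+2)
    simp only [bSigma, cRho, cSigma, scSigma]
    split_ifs <;> omega

lemma cb_rho (hρ : IsPartition ρ) (hσ : IsPartition σ) (i : ℕ) :
    cRho (bRho ρ σ) (bSigma ρ σ) i = scRho ρ σ i := by
  match i with
  | 0 =>
    have h1 := hρ 0; have h2 := hσ 0
    simp only [bRho, bSigma, cRho, scRho]
    split_ifs <;> omega
  | (i+1) =>
    have h1 := hρ i; have h2 := hρ (i+1); have h3 := hσ i; have h4 := hσ (i+1)
    simp only [bRho, bSigma, cRho, scRho]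
    split_ifs <;> omega

lemma cb_sigma (hρ : IsPartition ρ) (hσ : IsPartition σ) (i : ℕ) :
    cSigma (bRho ρ σ) (bSigma ρ σ) i = scSigma ρ σ i := by
  match i with
  | 0 =>
    have h1 := hρ 0; have h2 := hσ 0; have h3 := hρ 1; have h4 := hσ 1
    simp only [bRho, bSigma, cSigma, scSigma]
    split_ifs <;> omega
  | (i+1) =>
    have h1 := hρ i; have h2 := hρ (i+1); have h3 := hσ i; have h4 := hσ (i+1)
    have h5 := hρ (i+2); have h6 := hσ (i+2)
    simp only [bRho, bSigma, cSigma, scSigma]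
    split_ifs <;> omega

end
section
variable {ρ σ : ℕ → ℕ}

lemma psum_succ' (π : ℕ → ℕ) (k : ℕ) : psum π (k+1) = psum π k + π k :=
  Finset.sum_range_succ π k

lemma interleave_even' (ρ σ : ℕ → ℕ) (k : ℕ) : interleave ρ σ (2*k) = ρ k := by
  have h1 : (2*k) % 2 = 0 := by omega
  have h2 : (2*k) / 2 = k := by omega
  simp [interleave, h1, h2]

lemma interleave_odd' (ρ σ : ℕ → ℕ) (k : ℕ) : interleave ρ σ (2*k+1) = σ k := by
  have h1 : (2*k+1) % 2 = 1 := by omega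
  have h2 : (2*k+1) / 2 = k := by omega
  simp [interleave, h1, h2]

lemma sc_partition_rho (hρ : IsPartition ρ) (hσ : IsPartition σ) :
    IsPartition (scRho ρ σ) := by
  intro i
  match i with
  | 0 =>
    have h1 := hρ 0; have h2 := hσ 0; have h3 := hρ 1; have h4 := hσ 1
    simp only [scRho]; split_ifs <;> omega
  | (i+1) =>
    have h1 := hρ i; have h2 := hρ (i+1); have h3 := hσ i; have h4 := hσ (i+1)
    have h5 := hρ (i+2); have h6 := hσ (i+2)
    simp only [scRho]; split_ifs <;> omega

lemma sc_partition_sigma (hρ : IsPartition ρ) (hσ : IsPartition σ) :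
    IsPartition (scSigma ρ σ) := by
  intro i
  have h1 := hρ i; have h2 := hρ (i+1); have h3 := hσ i; have h4 := hσ (i+1)
  have h5 := hρ (i+2); have h6 := hσ (i+2)
  simp only [scSigma]; split_ifs <;> omega

lemma sc_QS (hρ : IsPartition ρ) (hσ : IsPartition σ) :
    QS (scRho ρ σ) (scSigma ρ σ) := by
  intro i
  constructor
  · match i with
    | 0 =>
      have h1 := hρ 0; have h2 := hσ 0; have h3 := hρ 1; have h4 := hσ 1
      simp only [scRho, scSigma]; split_ifs <;> omega
    | (i+1) =>
      have h1 := hρ i; have h2 := hρ (i+1); have h3 := hσ i; have h4 := hσ (i+1)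
      have h5 := hρ (i+2); have h6 := hσ (i+2)
      simp only [scRho, scSigma]; split_ifs <;> omega
  · have h1 := hρ i; have h2 := hρ (i+1); have h3 := hσ i; have h4 := hσ (i+1)
    simp only [scRho, scSigma]; split_ifs <;> omega

lemma sc_psum (hρ : IsPartition ρ) (hσ : IsPartition σ) : ∀ k,
    (psum (interleave (scRho ρ σ) (scSigma ρ σ)) (2*k+1)
      = psum (interleave ρ σ) (2*k+1) + (if ρ k + 1 < σ k then (σ k - ρ k)/2 else 0))
  ∧ (psum (interleave (scRho ρ σ) (scSigma ρ σ)) (2*k+2)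
      = psum (interleave ρ σ) (2*k+2) + (if σ k < ρ (k+1) then (ρ (k+1) - σ k + 1)/2 else 0)) := by
  have key : ∀ k, (psum (interleave (scRho ρ σ) (scSigma ρ σ)) (2*k+1)
      = psum (interleave ρ σ) (2*k+1) + (if ρ k + 1 < σ k then (σ k - ρ k)/2 else 0)) →
      (psum (interleave (scRho ρ σ) (scSigma ρ σ)) (2*k+2)
      = psum (interleave ρ σ) (2*k+2) + (if σ k < ρ (k+1) then (ρ (k+1) - σ k + 1)/2 else 0)) := by
    intro k hP
    have e1 := psum_succ' (interleave (scRho ρ σ) (scSigma ρ σ)) (2*k+1)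
    have e2 := psum_succ' (interleave ρ σ) (2*k+1)
    rw [interleave_odd'] at e1 e2
    rw [show 2*k+1+1 = 2*k+2 from rfl] at e1 e2
    have h1 := hρ k; have h3 := hσ k
    simp only [scSigma] at e1
    split_ifs at hP e1 ⊢ <;> omega
  intro k
  induction k with
  | zero =>
    have hP : psum (interleave (scRho ρ σ) (scSigma ρ σ)) (2*0+1)
      = psum (interleave ρ σ) (2*0+1) + (if ρ 0 + 1 < σ 0 then (σ 0 - ρ 0)/2 else 0) := by
      have e1 := psum_succ' (interleave (scRho ρ σ) (scSigma ρ σ)) 0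
      have e2 := psum_succ' (interleave ρ σ) 0
      have e3 := interleave_even' (scRho ρ σ) (scSigma ρ σ) 0
      have e4 := interleave_even' ρ σ 0
      norm_num [psum] at e1 e2 e3 e4 ⊢
      rw [e3, e4]
      simp only [scRho]; split_ifs <;> omega
    exact ⟨hP, key 0 hP⟩
  | succ k ih =>
    have hQ := ih.2
    have hP : psum (interleave (scRho ρ σ) (scSigma ρ σ)) (2*(k+1)+1)
      = psum (interleave ρ σ) (2*(k+1)+1)
        + (if ρ (k+1) + 1 < σ (k+1) then (σ (k+1) - ρ (k+1))/2 else 0) := by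
      have e1 := psum_succ' (interleave (scRho ρ σ) (scSigma ρ σ)) (2*(k+1))
      have e2 := psum_succ' (interleave ρ σ) (2*(k+1))
      rw [interleave_even'] at e1 e2
      have e5 : 2*(k+1) = 2*k+2 := by ring
      rw [e5] at e1 e2 ⊢
      rw [show 2*k+2+1 = 2*k+3 from rfl] at e1 e2 ⊢
      have h1 := hρ k; have h2 := hρ (k+1); have h3 := hσ k; have h4 := hσ (k+1)
      simp only [scRho] at e1
      split_ifs at hQ e1 ⊢ <;> omega
    exact ⟨hP, key (k+1) hP⟩

end
section
variable {ρ σ : ℕ → ℕ}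

lemma psum_stab (π : ℕ → ℕ) (N : ℕ) (h0 : ∀ i, N ≤ i → π i = 0) :
    ∀ M, N ≤ M → psum π M = psum π N := by
  have key : ∀ t, psum π (N + t) = psum π N := by
    intro t
    induction t with
    | zero => rfl
    | succ t ih =>
      rw [show N+(t+1) = (N+t)+1 from rfl, psum_succ', h0 (N+t) (by omega), ih, Nat.add_zero]
  intro M hM
  obtain ⟨t, rfl⟩ : ∃ t, M = N + t := ⟨M - N, by omega⟩
  exact key t

lemma sc_vanish (hρ : IsPartition ρ) (hσ : IsPartition σ) (N : ℕ)
    (h0 : ∀ i, N ≤ i → interleave ρ σ i = 0) :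
    ∀ j, 2*N ≤ j → interleave (scRho ρ σ) (scSigma ρ σ) j = 0 := by
  have hρ0 : ∀ i, N ≤ i → ρ i = 0 := by
    intro i hi
    have := h0 (2*i) (by omega)
    rwa [interleave_even'] at this
  have hσ0 : ∀ i, N ≤ i → σ i = 0 := by
    intro i hi
    have := h0 (2*i+1) (by omega)
    rwa [interleave_odd'] at this
  intro j hj
  rcases Nat.even_or_odd j with ⟨m, hm⟩ | ⟨m, hm⟩
  · have hjm : j = 2*m := by omega
    subst hjm
    rw [interleave_even']
    have hmN : N ≤ m := by omega
    match m with
    | 0 =>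
      have := hρ0 0 (by omega); have := hσ0 0 (by omega)
      simp only [scRho]; split_ifs <;> omega
    | (t+1) =>
      have h1 := hρ0 (t+1) hmN; have h2 := hσ0 (t+1) hmN
      have h3 : ρ (t+1+1) = 0 := hρ0 (t+2) (by omega)
      have h4 := hρ t  -- ρ (t+1) ≤ ρ t; not needed maybe
      simp only [scRho]; split_ifs <;> omega
  · have hjm : j = 2*m+1 := by omega
    subst hjm
    rw [interleave_odd']
    have hmN : N ≤ m := by omega
    have h1 := hρ0 m hmN; have h2 := hσ0 m hmN
    have h3 : ρ (m+1) = 0 := hρ0 (m+1) (by omega)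
    simp only [scSigma]; split_ifs <;> omega

lemma sc_biLE (hρ : IsPartition ρ) (hσ : IsPartition σ) :
    BiLE ρ σ (scRho ρ σ) (scSigma ρ σ) := by
  intro m
  match m with
  | 0 => exact le_refl _
  | (m+1) =>
    rcases Nat.even_or_odd m with ⟨k, hk⟩ | ⟨k, hk⟩
    · obtain ⟨k, rfl⟩ : ∃ k', m = 2*k' := ⟨k, by omega⟩
      have := (sc_psum hρ hσ k).1
      show psum _ (2*k+1) ≤ psum _ (2*k+1)
      split_ifs at this <;> omega
    · obtain ⟨k, rfl⟩ : ∃ k', m = 2*k'+1 := ⟨k, by omega⟩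
      have := (sc_psum hρ hσ k).2
      show psum _ (2*k+2) ≤ psum _ (2*k+2)
      split_ifs at this <;> omega

lemma sc_min (hρ : IsPartition ρ) (hσ : IsPartition σ) (τ υ : ℕ → ℕ)
    (hQS : QS τ υ) (hle : BiLE ρ σ τ υ) :
    BiLE (scRho ρ σ) (scSigma ρ σ) τ υ := by
  intro m
  match m with
  | 0 => exact le_refl _
  | (m+1) =>
    rcases Nat.even_or_odd m with ⟨k, hk⟩ | ⟨k, hk⟩
    · obtain ⟨k, rfl⟩ : ∃ k', m = 2*k' := ⟨k, by omega⟩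
      show psum _ (2*k+1) ≤ psum _ (2*k+1)
      have hsc := (sc_psum hρ hσ k).1
      have d0 := hle (2*k)
      have d1 := hle (2*k+1)
      have d2 := hle (2*k+2)
      have q := (hQS k).1
      have e1 := psum_succ' (interleave ρ σ) (2*k)
      have e2 := psum_succ' (interleave ρ σ) (2*k+1)
      have e3 := psum_succ' (interleave τ υ) (2*k)
      have e4 := psum_succ' (interleave τ υ) (2*k+1)
      rw [interleave_even'] at e1 e3
      rw [interleave_odd'] at e2 e4
      rw [show 2*k+1+1 = 2*k+2 from rfl] at e2 e4
      split_ifs at hsc <;> omega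
    · obtain ⟨k, rfl⟩ : ∃ k', m = 2*k'+1 := ⟨k, by omega⟩
      show psum _ (2*k+2) ≤ psum _ (2*k+2)
      have hsc := (sc_psum hρ hσ k).2
      have d1 := hle (2*k+1)
      have d2 := hle (2*k+2)
      have d3 := hle (2*k+3)
      have q := (hQS k).2
      have e2 := psum_succ' (interleave ρ σ) (2*k+1)
      have e4 := psum_succ' (interleave τ υ) (2*k+1)
      have e5 := psum_succ' (interleave ρ σ) (2*k+2)
      have e6 := psum_succ' (interleave τ υ) (2*k+2)
      rw [interleave_odd'] at e2 e4
      rw [show (2*k+2 : ℕ) = 2*(k+1) from by ring] at e5 e6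
      rw [interleave_even'] at e5 e6
      rw [show (2*(k+1) : ℕ) = 2*k+2 from by ring] at e5 e6
      rw [show 2*k+1+1 = 2*k+2 from rfl] at e2 e4
      rw [show 2*k+2+1 = 2*k+3 from rfl] at e5 e6
      split_ifs at hsc <;> omega

end
section
variable {ρ σ : ℕ → ℕ}

lemma sc_comp {n : ℕ} (hρ : IsPartition ρ) (hσ : IsPartition σ)
    (hc : IsComposition n (interleave ρ σ)) :
    IsComposition n (interleave (scRho ρ σ) (scSigma ρ σ)) := by
  obtain ⟨N, h0, hsum⟩ := hc
  refine ⟨2*N+2, fun j hj => sc_vanish hρ hσ N h0 j (by omega), ?_⟩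
  have hQ := (sc_psum hρ hσ N).2
  have hρ0 : ρ (N+1) = 0 := by
    have := h0 (2*(N+1)) (by omega)
    rwa [interleave_even'] at this
  have hcorr : psum (interleave (scRho ρ σ) (scSigma ρ σ)) (2*N+2)
      = psum (interleave ρ σ) (2*N+2) := by
    split_ifs at hQ <;> omega
  rw [hcorr, psum_stab (interleave ρ σ) N h0 (2*N+2) (by omega), hsum]

end
/-- `((ρ;σ)^C)^B = ((ρ;σ)^B)^C`, and the common value is the
special closure `(ρ;σ)°`, i.e. the minimum special bipartition dominating
`(ρ;σ)`. -/
theorem bC_eq_cB_eq_special (n : ℕ) (ρ σ : ℕ → ℕ) (h : IsBipartition n ρ σ) :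
    (∀ i, bRho (cRho ρ σ) (cSigma ρ σ) i = cRho (bRho ρ σ) (bSigma ρ σ) i) ∧
    (∀ i, bSigma (cRho ρ σ) (cSigma ρ σ) i = cSigma (bRho ρ σ) (bSigma ρ σ) i) ∧
    (IsBipartition n (bRho (cRho ρ σ) (cSigma ρ σ)) (bSigma (cRho ρ σ) (cSigma ρ σ)) ∧
     QS (bRho (cRho ρ σ) (cSigma ρ σ)) (bSigma (cRho ρ σ) (cSigma ρ σ)) ∧
     BiLE ρ σ (bRho (cRho ρ σ) (cSigma ρ σ)) (bSigma (cRho ρ σ) (cSigma ρ σ)) ∧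
     (∀ τ υ : ℕ → ℕ, IsBipartition n τ υ → QS τ υ → BiLE ρ σ τ υ →
        BiLE (bRho (cRho ρ σ) (cSigma ρ σ)) (bSigma (cRho ρ σ) (cSigma ρ σ)) τ υ)) := by
  obtain ⟨hρ, hσ, hcomp⟩ := h
  have e1 : bRho (cRho ρ σ) (cSigma ρ σ) = scRho ρ σ := funext (bc_rho hρ hσ)
  have e2 : bSigma (cRho ρ σ) (cSigma ρ σ) = scSigma ρ σ := funext (bc_sigma hρ hσ)
  have e3 : cRho (bRho ρ σ) (bSigma ρ σ) = scRho ρ σ := funext (cb_rho hρ hσ)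
  have e4 : cSigma (bRho ρ σ) (bSigma ρ σ) = scSigma ρ σ := funext (cb_sigma hρ hσ)
  rw [e1, e2, e3, e4]
  exact ⟨fun i => rfl, fun i => rfl,
    ⟨sc_partition_rho hρ hσ, sc_partition_sigma hρ hσ, sc_comp hρ hσ hcomp⟩,
    sc_QS hρ hσ, sc_biLE hρ hσ,
    fun τ υ hb hq hl => sc_min hρ hσ τ υ hq hl⟩
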